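/- arXiv:1403.1026 — 2 statements merged into one kernel-verified Lean document; each statement's English description precedes it below -/
import Mathlib

section
/- For every s ∈ S and every idempotent e ∈ E, one has (δ_s + J)·(δ_{s*} + J) = δ_e + J = (δ_{s*} + J)·(δ_s + J) in A/J; hence each coset δ_s + J is invertible in the unital algebra A/J with inverse δ_{s*} + J. -/
open MonoidAlgebra

/-- An inverse semigroup: a semigroup in which every element `s` has a unique
generalized inverse `s*` with `s * s* * s = s` and `s* * s * s* = s*`. -/
class InverseSemigroup (S : Type*) extends Semigroup S where
  star : S → S
  star_left : ∀ s : S, s * star s * s = s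
  star_right : ∀ s : S, star s * s * star s = star s
  star_unique : ∀ s t : S, s * t * s = s → t * s * t = t → t = star s

variable (S : Type*) [InverseSemigroup S]

/-- The ℂ-linear span in the semigroup algebra `A = MonoidAlgebra ℂ S` of the set
`{δ_{s e t} - δ_{s t} : s, t ∈ S, e ∈ E}`, where `E = {e : e * e = e}` is the set of
idempotents of `S`. -/
noncomputable def J : Submodule ℂ (MonoidAlgebra ℂ S) :=
  Submodule.span ℂ { x | ∃ s t e : S, e * e = e ∧
    x = single (s * e * t) (1 : ℂ) - single (s * t) (1 : ℂ) }

variable {S}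

theorem mul_mem_J (f : MonoidAlgebra ℂ S) {x : MonoidAlgebra ℂ S} (hx : x ∈ J S) :
    f * x ∈ J S := by
  induction hx using Submodule.span_induction with
  | mem x hx =>
    obtain ⟨s, t, e, he, rfl⟩ := hx
    induction f using MonoidAlgebra.induction_linear with
    | zero => simp
    | add a b ha hb => rw [add_mul]; exact (J S).add_mem ha hb
    | single a b =>
      have : (single a b : MonoidAlgebra ℂ S) *
            (single (s * e * t) (1 : ℂ) - single (s * t) (1 : ℂ))
          = b • (single ((a * s) * e * t) (1 : ℂ) - single ((a * s) * t) (1 : ℂ)) := by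
        rw [mul_sub, single_mul_single, single_mul_single, smul_sub, smul_single', smul_single']
        simp [mul_assoc]
      rw [this]
      exact (J S).smul_mem _ (Submodule.subset_span ⟨a * s, t, e, he, rfl⟩)
  | zero => simp
  | add x y hx hy ihx ihy => rw [mul_add]; exact (J S).add_mem ihx ihy
  | smul c x hx ih => rw [mul_smul_comm]; exact (J S).smul_mem _ ih

theorem J_mul_mem (f : MonoidAlgebra ℂ S) {x : MonoidAlgebra ℂ S} (hx : x ∈ J S) :
    x * f ∈ J S := by
  induction hx using Submodule.span_induction with
  | mem x hx =>
    obtain ⟨s, t, e, he, rfl⟩ := hx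
    induction f using MonoidAlgebra.induction_linear with
    | zero => simp
    | add a b ha hb => rw [mul_add]; exact (J S).add_mem ha hb
    | single a b =>
      have : (single (s * e * t) (1 : ℂ) - single (s * t) (1 : ℂ)) *
            (single a b : MonoidAlgebra ℂ S)
          = b • (single (s * e * (t * a)) (1 : ℂ) - single (s * (t * a)) (1 : ℂ)) := by
        rw [sub_mul, single_mul_single, single_mul_single, smul_sub, smul_single', smul_single']
        simp [mul_assoc]
      rw [this]
      exact (J S).smul_mem _ (Submodule.subset_span ⟨s, t * a, e, he, rfl⟩)
  | zero => simp
  | add x y hx hy ihx ihy => rw [add_mul]; exact (J S).add_mem ihx ihy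
  | smul c x hx ih => rw [smul_mul_assoc]; exact (J S).smul_mem _ ih

/-- Multiplication of cosets in the quotient algebra `A ⧸ J`, well defined
since `J` is a two-sided ideal: `(f + J) * (g + J) = f * g + J`. -/
noncomputable instance : Mul (MonoidAlgebra ℂ S ⧸ J S) :=
  ⟨Quotient.map₂' (· * ·) (by
    intro a₁ a₂ h₁ b₁ b₂ h₂
    have h₁' : a₁ - a₂ ∈ J S := (Submodule.quotientRel_def (J S)).mp h₁
    have h₂' : b₁ - b₂ ∈ J S := (Submodule.quotientRel_def (J S)).mp h₂
    refine (Submodule.quotientRel_def (J S)).mpr ?_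
    have : a₁ * b₁ - a₂ * b₂ = a₁ * (b₁ - b₂) + (a₁ - a₂) * b₂ := by
      rw [mul_sub, sub_mul]; abel
    rw [this]
    exact (J S).add_mem (mul_mem_J _ h₂') (J_mul_mem _ h₁'))⟩

variable (S)

/-- The quotient map `π : A → A ⧸ J`, sending `f` to the coset `f + J`. -/
noncomputable def π : MonoidAlgebra ℂ S → MonoidAlgebra ℂ S ⧸ J S := Submodule.Quotient.mk

theorem π_mul (f g : MonoidAlgebra ℂ S) : π S (f * g) = π S f * π S g := rfl

variable {S}

open InverseSemigroup in
lemma star_idem' {e : S} (he : e * e = e) : star e = e :=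
  (star_unique e e (by rw [he, he]) (by rw [he, he])).symm

open InverseSemigroup in
lemma idem_mul_idem {e f : S} (he : e * e = e) (hf : f * f = f) :
    (e * f) * (e * f) = e * f := by
  set a := star (e * f) with ha
  have hae : (e * f) * a * (e * f) = e * f := star_left _
  have haa : a * (e * f) * a = a := star_right _
  have h1 : (e * f) * (f * a * e) * (e * f) = e * f := by
    calc (e * f) * (f * a * e) * (e * f)
        = e * (f * f) * a * (e * e) * f := by simp only [mul_assoc]
      _ = (e * f) * a * (e * f) := by rw [hf, he]; try simp only [mul_assoc]
      _ = e * f := hae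
  have h2 : (f * a * e) * (e * f) * (f * a * e) = f * a * e := by
    calc (f * a * e) * (e * f) * (f * a * e)
        = f * (a * ((e * e) * (f * f) * a)) * e := by simp only [mul_assoc]
      _ = f * (a * (e * f) * a) * e := by rw [he, hf]; try simp only [mul_assoc]
      _ = f * a * e := by rw [haa]; try simp only [mul_assoc]
  have key : f * a * e = a := star_unique _ _ h1 h2
  have aidem : a * a = a := by
    calc a * a = (f * a * e) * (f * a * e) := by rw [key]
      _ = f * (a * (e * f) * a) * e := by simp only [mul_assoc]
      _ = f * a * e := by rw [haa]; try simp only [mul_assoc]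
      _ = a := key
  have hefa : e * f = star a := star_unique a (e * f) haa hae
  have : e * f = a := by rw [hefa, star_idem' aidem]
  rw [← this] at aidem
  exact aidem

open InverseSemigroup in
lemma idem_comm {e f : S} (he : e * e = e) (hf : f * f = f) : e * f = f * e := by
  have hef := idem_mul_idem he hf
  have hfe := idem_mul_idem hf he
  have h1 : (e * f) * (f * e) * (e * f) = e * f := by
    calc (e * f) * (f * e) * (e * f)
        = e * (f * f) * (e * e) * f := by simp only [mul_assoc]
      _ = (e * f) * (e * f) := by rw [hf, he]; try simp only [mul_assoc]
      _ = e * f := hef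
  have h2 : (f * e) * (e * f) * (f * e) = f * e := by
    calc (f * e) * (e * f) * (f * e)
        = f * (e * e) * (f * f) * e := by simp only [mul_assoc]
      _ = (f * e) * (f * e) := by rw [he, hf]; try simp only [mul_assoc]
      _ = f * e := hfe
  have hfes : f * e = star (e * f) := star_unique _ _ h1 h2
  have hefs : e * f = star (e * f) := by
    have := star_unique (e * f) (e * f)
      (by rw [hef, hef]) (by rw [hef, hef])
    exact this
  rw [hfes, ← hefs]

lemma single_idem_sub_single_idem_mem_J {f g : S} (hf : f * f = f) (hg : g * g = g) :
    single f (1 : ℂ) - single g (1 : ℂ) ∈ J S := by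
  have hfgf : f * g * f = f * g := by
    rw [mul_assoc, idem_comm hg hf, ← mul_assoc, hf]
  have hgfg : g * f * g = f * g := by
    rw [mul_assoc, idem_comm hf hg, ← mul_assoc, hg, idem_comm hg hf]
  have h1 : single (f * g) (1 : ℂ) - single f (1 : ℂ) ∈ J S := by
    have := Submodule.subset_span (R := ℂ)
      (s := { x | ∃ s t e : S, e * e = e ∧
        x = single (s * e * t) (1 : ℂ) - single (s * t) (1 : ℂ) })
      ⟨f, f, g, hg, rfl⟩
    rwa [hfgf, hf] at this
  have h2 : single (f * g) (1 : ℂ) - single g (1 : ℂ) ∈ J S := by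
    have := Submodule.subset_span (R := ℂ)
      (s := { x | ∃ s t e : S, e * e = e ∧
        x = single (s * e * t) (1 : ℂ) - single (s * t) (1 : ℂ) })
      ⟨g, g, f, hf, rfl⟩
    rwa [hgfg, hg] at this
  have : single f (1 : ℂ) - single g (1 : ℂ)
      = (single (f * g) (1 : ℂ) - single g (1 : ℂ))
        - (single (f * g) (1 : ℂ) - single f (1 : ℂ)) := by abel
  rw [this]
  exact (J S).sub_mem h2 h1

open InverseSemigroup in
lemma coset_single_idem (f : S) (hf : f * f = f) {e : S} (he : e * e = e) :
    π S (single f (1 : ℂ)) = π S (single e (1 : ℂ)) :=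
  (Submodule.Quotient.eq (J S)).mpr (single_idem_sub_single_idem_mem_J hf he)


/-- for every `s ∈ S` and every idempotent `e ∈ E`,
`(δ_s + J) * (δ_{s*} + J) = δ_e + J = (δ_{s*} + J) * (δ_s + J)` in `A ⧸ J`; hence each
coset `δ_s + J` is invertible in the unital algebra `A ⧸ J` (whose identity is `δ_e + J`)
with inverse `δ_{s*} + J`. -/
theorem coset_single_mul_coset_single_star (s e : S) (he : e * e = e) :
    π S (single s (1 : ℂ)) * π S (single (InverseSemigroup.star s) (1 : ℂ))
      = π S (single e (1 : ℂ)) ∧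
    π S (single (InverseSemigroup.star s) (1 : ℂ)) * π S (single s (1 : ℂ))
      = π S (single e (1 : ℂ)) := by
  constructor
  · rw [← π_mul, single_mul_single, one_mul]
    exact coset_single_idem _ (by
      rw [← mul_assoc, InverseSemigroup.star_left]) he
  · rw [← π_mul, single_mul_single, one_mul]
    exact coset_single_idem _ (by
      rw [← mul_assoc, InverseSemigroup.star_right]) he
end

section
/- Let D : A → A/J be a ℂ-linear map satisfying the Leibniz rule D(f * g) = π(f)·D(g) + D(f)·π(g) for all f, g ∈ A, let φ(s) = D(δ_s)·π(δ_{s*}), and for s ∈ S define T_s : A/J → A/J by T_s(Φ) = π(δ_s)·Φ·π(δ_{s*}) + φ(s). Then for every s ∈ S, T_s ∘ T_{s*} is the identity map of A/J; consequently, the set B = φ(S) ⊆ A/J satisfies T_s(B) = B for every s ∈ S. -/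
open MonoidAlgebra

variable (S : Type*) [InverseSemigroup S]

variable {S}

variable (S)

variable {S}

section ISS
open InverseSemigroup


lemma iss_star_star (s : S) : star (star s) = s :=
  (star_unique (star s) s (star_right s) (star_left s)).symm

lemma iss_idem_mul {e f : S} (he : e*e = e) (hf : f*f = f) : (e*f)*(e*f) = e*f := by
  set x := star (e*f) with hx
  have h1 : (e*f) * x * (e*f) = e*f := star_left _
  have h2 : x * (e*f) * x = x := star_right _
  have he' : ∀ y : S, e * (e * y) = e * y := fun y => by rw [← mul_assoc, he]
  have hf' : ∀ y : S, f * (f * y) = f * y := fun y => by rw [← mul_assoc, hf]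
  have h2' : ∀ y : S, x * (e * (f * (x * y))) = x * y := fun y => by
    have := congrArg (· * y) h2; simpa only [mul_assoc] using this
  have hg_left : (e*f) * (f*(x*e)) * (e*f) = e*f := by
    have := congrArg (fun z => e * (f * z)) (h2' (e*f))
    simp only [mul_assoc, hf', he']
    simpa only [mul_assoc] using h1
  have hg_right : (f*(x*e)) * (e*f) * (f*(x*e)) = f*(x*e) := by
    simp only [mul_assoc, he', hf']
    rw [h2' e]
  have hgx : f*(x*e) = x := star_unique (e*f) (f*(x*e)) hg_left hg_right
  have hxx : x * x = x := by
    conv_lhs => rw [← hgx]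
    simp only [mul_assoc, he', hf']
    rw [h2' e, hgx]
  have hefx : e*f = x := by
    have h3 : e*f = star x := star_unique x (e*f) h2 h1
    have h4 : x = star x := star_unique x x (by rw [hxx, hxx]) (by rw [hxx, hxx])
    rw [h3, ← h4]
  rw [hefx, hxx]

lemma iss_idem_comm {e f : S} (he : e*e = e) (hf : f*f = f) : e * f = f * e := by
  have hef := iss_idem_mul he hf
  have hfe := iss_idem_mul hf he
  have he' : ∀ y : S, e * (e * y) = e * y := fun y => by rw [← mul_assoc, he]
  have hf' : ∀ y : S, f * (f * y) = f * y := fun y => by rw [← mul_assoc, hf]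
  have h1 : (f*e) * (e*f) * (f*e) = f*e := by
    simp only [mul_assoc, he', hf']
    simpa only [mul_assoc] using hfe
  have h2 : (e*f) * (f*e) * (e*f) = e*f := by
    simp only [mul_assoc, he', hf']
    simpa only [mul_assoc] using hef
  have h3 : e*f = star (f*e) := star_unique (f*e) (e*f) h1 h2
  have h4 : f*e = star (f*e) := star_unique (f*e) (f*e)
    (by rw [hfe, hfe]) (by rw [hfe, hfe])
  rw [h3, ← h4]

lemma iss_mul_star_idem (s : S) : (s * star s) * (s * star s) = s * star s := by
  have := star_left s
  calc (s * star s) * (s * star s) = (s * star s * s) * star s := by simp only [mul_assoc]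
  _ = s * star s := by rw [this]

lemma iss_star_mul_idem (s : S) : (star s * s) * (star s * s) = star s * s := by
  have := star_right s
  calc (star s * s) * (star s * s) = (star s * s * star s) * s := by simp only [mul_assoc]
  _ = star s * s := by rw [this]

lemma iss_star_mul (s t : S) : star (s * t) = star t * star s := by
  have hc : (t * star t) * (star s * s) = (star s * s) * (t * star t) :=
    iss_idem_comm (iss_mul_star_idem t) (iss_star_mul_idem s)
  have h1 : (s*t) * (star t * star s) * (s*t) = s*t := by
    calc (s*t) * (star t * star s) * (s*t)
        = s * ((t * star t) * (star s * s)) * t := by simp only [mul_assoc]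
      _ = s * ((star s * s) * (t * star t)) * t := by rw [hc]
      _ = (s * star s * s) * (t * star t * t) := by simp only [mul_assoc]
      _ = s * t := by rw [star_left, star_left]
  have h2 : (star t * star s) * (s*t) * (star t * star s) = star t * star s := by
    calc (star t * star s) * (s*t) * (star t * star s)
        = star t * ((star s * s) * (t * star t)) * star s := by simp only [mul_assoc]
      _ = star t * ((t * star t) * (star s * s)) * star s := by rw [hc]
      _ = (star t * t * star t) * (star s * s * star s) := by simp only [mul_assoc]
      _ = star t * star s := by rw [star_right, star_right]
  exact (star_unique _ _ h1 h2).symm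
end ISS

section Helpers
open InverseSemigroup

lemma left_absorb_mem_J (e a : S) (he : e*e = e) :
    single (e*a) (1:ℂ) - single a (1:ℂ) ∈ J S := by
  refine Submodule.subset_span ⟨a * star a, a, e, he, ?_⟩
  have h1 : (a * star a) * e * a = e * a := by
    rw [iss_idem_comm (iss_mul_star_idem a) he]
    calc e * (a * star a) * a = e * (a * star a * a) := by simp only [mul_assoc]
      _ = e * a := by rw [star_left]
  have h2 : (a * star a) * a = a := star_left a
  rw [h1, h2]

lemma right_absorb_mem_J (e a : S) (he : e*e = e) :
    single (a*e) (1:ℂ) - single a (1:ℂ) ∈ J S := by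
  refine Submodule.subset_span ⟨a, star a * a, e, he, ?_⟩
  have h1 : a * e * (star a * a) = a * e := by
    calc a * e * (star a * a) = a * (e * (star a * a)) := by simp only [mul_assoc]
      _ = a * ((star a * a) * e) := by rw [iss_idem_comm he (iss_star_mul_idem a)]
      _ = (a * star a * a) * e := by simp only [mul_assoc]
      _ = a * e := by rw [star_left]
  have h2 : a * (star a * a) = a := by rw [← mul_assoc, star_left]
  rw [h1, h2]

lemma idem_mul_sub_mem (e : S) (he : e*e = e) (f : MonoidAlgebra ℂ S) :
    single e (1:ℂ) * f - f ∈ J S := by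
  induction f using MonoidAlgebra.induction_linear with
  | zero => simp
  | add a b ha hb =>
    rw [mul_add]
    have h := (J S).add_mem ha hb
    convert h using 1
    exact (sub_add_sub_comm _ _ _ _).symm
  | single a b =>
    have h : single e (1:ℂ) * single a b - single a b
        = b • (single (e*a) (1:ℂ) - single a (1:ℂ)) := by
      rw [single_mul_single, one_mul, smul_sub, smul_single', smul_single', mul_one]
    rw [h]; exact (J S).smul_mem _ (left_absorb_mem_J e a he)

lemma mul_idem_sub_mem (e : S) (he : e*e = e) (f : MonoidAlgebra ℂ S) :
    f * single e (1:ℂ) - f ∈ J S := by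
  induction f using MonoidAlgebra.induction_linear with
  | zero => simp
  | add a b ha hb =>
    rw [add_mul]
    have h := (J S).add_mem ha hb
    convert h using 1
    exact (sub_add_sub_comm _ _ _ _).symm
  | single a b =>
    have h : single a b * single e (1:ℂ) - single a b
        = b • (single (a*e) (1:ℂ) - single a (1:ℂ)) := by
      rw [single_mul_single, mul_one, smul_sub, smul_single', smul_single', mul_one]
    rw [h]; exact (J S).smul_mem _ (right_absorb_mem_J e a he)

lemma π_idem_mul (e : S) (he : e*e = e) (Φ : MonoidAlgebra ℂ S ⧸ J S) :
    π S (single e (1:ℂ)) * Φ = Φ := by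
  obtain ⟨f, rfl⟩ := Submodule.Quotient.mk_surjective (J S) Φ
  show π S (single e (1:ℂ)) * π S f = π S f
  rw [← π_mul]
  exact (Submodule.Quotient.eq _).mpr (idem_mul_sub_mem e he f)

lemma π_mul_idem (e : S) (he : e*e = e) (Φ : MonoidAlgebra ℂ S ⧸ J S) :
    Φ * π S (single e (1:ℂ)) = Φ := by
  obtain ⟨f, rfl⟩ := Submodule.Quotient.mk_surjective (J S) Φ
  show π S f * π S (single e (1:ℂ)) = π S f
  rw [← π_mul]
  exact (Submodule.Quotient.eq _).mpr (mul_idem_sub_mem e he f)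

lemma π_single_left (e a : S) (he : e*e = e) :
    π S (single (e*a) (1:ℂ)) = π S (single a (1:ℂ)) :=
  (Submodule.Quotient.eq _).mpr (left_absorb_mem_J e a he)

lemma πq_mk_mul (f g : MonoidAlgebra ℂ S) :
    (Submodule.Quotient.mk f : MonoidAlgebra ℂ S ⧸ J S) * Submodule.Quotient.mk g
      = Submodule.Quotient.mk (f * g) := rfl

lemma πq_assoc (x y z : MonoidAlgebra ℂ S ⧸ J S) : x*y*z = x*(y*z) := by
  obtain ⟨f, rfl⟩ := Submodule.Quotient.mk_surjective (J S) x
  obtain ⟨g, rfl⟩ := Submodule.Quotient.mk_surjective (J S) y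
  obtain ⟨h, rfl⟩ := Submodule.Quotient.mk_surjective (J S) z
  rw [πq_mk_mul, πq_mk_mul, πq_mk_mul, πq_mk_mul, mul_assoc]

lemma πq_mul_neg (x y : MonoidAlgebra ℂ S ⧸ J S) : x * (-y) = -(x*y) := by
  obtain ⟨f, rfl⟩ := Submodule.Quotient.mk_surjective (J S) x
  obtain ⟨g, rfl⟩ := Submodule.Quotient.mk_surjective (J S) y
  rw [← Submodule.Quotient.mk_neg, πq_mk_mul, πq_mk_mul, ← Submodule.Quotient.mk_neg, mul_neg]

lemma πq_mul_add (x y z : MonoidAlgebra ℂ S ⧸ J S) : x * (y + z) = x*y + x*z := by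
  obtain ⟨f, rfl⟩ := Submodule.Quotient.mk_surjective (J S) x
  obtain ⟨g, rfl⟩ := Submodule.Quotient.mk_surjective (J S) y
  obtain ⟨h, rfl⟩ := Submodule.Quotient.mk_surjective (J S) z
  rw [← Submodule.Quotient.mk_add, πq_mk_mul, πq_mk_mul, πq_mk_mul,
    ← Submodule.Quotient.mk_add, mul_add]

lemma πq_add_mul (x y z : MonoidAlgebra ℂ S ⧸ J S) : (x + y) * z = x*z + y*z := by
  obtain ⟨f, rfl⟩ := Submodule.Quotient.mk_surjective (J S) x
  obtain ⟨g, rfl⟩ := Submodule.Quotient.mk_surjective (J S) y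
  obtain ⟨h, rfl⟩ := Submodule.Quotient.mk_surjective (J S) z
  rw [← Submodule.Quotient.mk_add, πq_mk_mul, πq_mk_mul, πq_mk_mul,
    ← Submodule.Quotient.mk_add, add_mul]

end Helpers

/-- with `D`, `φ`, `T` as before, for every `s ∈ S` the composite
`T_s ∘ T_{s*}` is the identity map of `A ⧸ J`; consequently the set `B = φ(S)` satisfies
`T_s(B) = B` for every `s ∈ S`. -/
theorem T_comp_T_star_eq_id
    (D : MonoidAlgebra ℂ S →ₗ[ℂ] MonoidAlgebra ℂ S ⧸ J S)
    (hD : ∀ f g : MonoidAlgebra ℂ S, D (f * g) = π S f * D g + D f * π S g)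
    (φ : S → MonoidAlgebra ℂ S ⧸ J S)
    (hφ : ∀ s : S, φ s = D (single s (1 : ℂ)) * π S (single (InverseSemigroup.star s) (1 : ℂ)))
    (T : S → (MonoidAlgebra ℂ S ⧸ J S) → MonoidAlgebra ℂ S ⧸ J S)
    (hT : ∀ (s : S) (Φ : MonoidAlgebra ℂ S ⧸ J S),
      T s Φ = π S (single s (1 : ℂ)) * Φ * π S (single (InverseSemigroup.star s) (1 : ℂ)) + φ s)
 :
    (∀ (s : S) (Φ : MonoidAlgebra ℂ S ⧸ J S), T s (T (InverseSemigroup.star s) Φ) = Φ) ∧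
    (∀ s : S, T s '' Set.range φ = Set.range φ) := by
  have hsm : ∀ a b : S, π S (single a (1:ℂ)) * π S (single b (1:ℂ))
      = π S (single (a*b) (1:ℂ)) := by
    intro a b; rw [← π_mul, single_mul_single, one_mul]
  have assoc4 : ∀ a b c d : MonoidAlgebra ℂ S ⧸ J S, a * (b * c) * d = a * b * (c * d) :=
    fun a b c d => by rw [← πq_assoc a b c, πq_assoc (a*b) c d]
  have hD0 : ∀ e : S, e*e = e → D (single e (1:ℂ)) = 0 := by
    intro e he
    have h := hD (single e (1:ℂ)) (single e (1:ℂ))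
    rw [single_mul_single, one_mul, he, π_idem_mul e he, π_mul_idem e he] at h
    exact add_eq_left.mp h.symm
  have hkey : ∀ s : S, π S (single s (1:ℂ))
      * D (single (InverseSemigroup.star s) (1:ℂ)) = - φ s := by
    intro s
    have h := hD (single s (1:ℂ)) (single (InverseSemigroup.star s) (1:ℂ))
    rw [single_mul_single, one_mul, hD0 _ (iss_mul_star_idem s), ← hφ] at h
    exact eq_neg_of_add_eq_zero_left h.symm
  have hTφ : ∀ s t : S, T s (φ t) = φ (s * t) := by
    intro s t
    rw [hT]
    have h2 : D (single (s*t) (1:ℂ)) = π S (single s (1:ℂ)) * D (single t (1:ℂ))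
        + D (single s (1:ℂ)) * π S (single t (1:ℂ)) := by
      rw [← hD]; congr 1; rw [single_mul_single, one_mul]
    have hπ : π S (single (t * (InverseSemigroup.star t * InverseSemigroup.star s)) (1:ℂ))
        = π S (single (InverseSemigroup.star s) (1:ℂ)) := by
      rw [show t * (InverseSemigroup.star t * InverseSemigroup.star s)
          = (t * InverseSemigroup.star t) * (InverseSemigroup.star s) from (mul_assoc _ _ _).symm]
      exact π_single_left _ _ (iss_mul_star_idem t)
    rw [hφ (s*t), iss_star_mul, h2, πq_add_mul]
    have ht2 : D (single s (1:ℂ)) * π S (single t (1:ℂ))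
        * π S (single (InverseSemigroup.star t * InverseSemigroup.star s) (1:ℂ)) = φ s := by
      rw [πq_assoc, hsm, hπ, ← hφ]
    rw [ht2]
    congr 1
    rw [hφ t, ← hsm (InverseSemigroup.star t) (InverseSemigroup.star s)]
    exact assoc4 _ _ _ _
  have hmain : ∀ (s : S) (Φ : MonoidAlgebra ℂ S ⧸ J S),
      T s (T (InverseSemigroup.star s) Φ) = Φ := by
    intro s Φ
    rw [hT (InverseSemigroup.star s) Φ, hT s, iss_star_star s]
    set ps := π S (single s (1:ℂ)) with hps
    set ps' := π S (single (InverseSemigroup.star s) (1:ℂ)) with hps'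
    rw [πq_mul_add ps (ps' * Φ * ps) (φ (InverseSemigroup.star s)),
      πq_add_mul (ps * (ps' * Φ * ps)) (ps * φ (InverseSemigroup.star s)) ps']
    have hA : ps * (ps' * Φ * ps) * ps' = Φ := by
      rw [← πq_assoc ps (ps' * Φ) ps, ← πq_assoc ps ps' Φ,
        πq_assoc (ps * ps' * Φ) ps ps', hsm s (InverseSemigroup.star s),
        π_idem_mul _ (iss_mul_star_idem s) Φ, π_mul_idem _ (iss_mul_star_idem s) Φ]
    have hB : ps * φ (InverseSemigroup.star s) * ps' = -(φ s) := by
      rw [hφ (InverseSemigroup.star s), iss_star_star s,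
        assoc4 ps (D (single (InverseSemigroup.star s) (1:ℂ))) ps ps',
        hkey s, hsm s (InverseSemigroup.star s), π_mul_idem _ (iss_mul_star_idem s)]
    rw [hA, hB, add_assoc, neg_add_cancel, add_zero]
  refine ⟨hmain, fun s => Set.Subset.antisymm ?_ ?_⟩
  · rintro _ ⟨_, ⟨t, rfl⟩, rfl⟩
    exact ⟨s * t, (hTφ s t).symm⟩
  · rintro _ ⟨t, rfl⟩
    exact ⟨φ (InverseSemigroup.star s * t), ⟨InverseSemigroup.star s * t, rfl⟩,
      by rw [← hTφ (InverseSemigroup.star s) t, hmain s (φ t)]⟩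
end
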